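/- For every τ > 0, every natural number m, and every y ∈ ℝ, one has ∫_ℝ K_τ(y,z)·h_m(z) dz = e^{(1 − m/2)τ}·h_m(y), where K_τ is the one-dimensional Mehler-type kernel. In other words, h_m is an eigenfunction of the integral operator with kernel K_τ, with eigenvalue e^{(1 − m/2)τ}. -/

import Mathlib

open Real MeasureTheory Polynomial

/-- Physicists' Hermite polynomials, determined by `H 0 = 1`, `H 1 x = 2x` and the
recurrence `H (m+1) x = 2x · H m x − (H m)' x`. -/
noncomputable def physHermite : ℕ → ℝ → ℝ
  | 0 => fun _ => 1
  | m + 1 => fun x => 2 * x * physHermite m x - deriv (physHermite m) x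

/-- The normalizing constants `c_m = 2^{−m/2} (4π)^{−1/4} (m!)^{−1/2}`. -/
noncomputable def hermiteCoeff (m : ℕ) : ℝ :=
  (2 : ℝ) ^ (-(m : ℝ) / 2) * (4 * π) ^ (-(1 / 4 : ℝ)) * (m.factorial : ℝ) ^ (-(1 / 2 : ℝ))

/-- The normalized Hermite functions `h_m(y) = c_m · H_m(y/2)`. -/
noncomputable def h (m : ℕ) (y : ℝ) : ℝ := hermiteCoeff m * physHermite m (y / 2)

/-- The one-dimensional Mehler-type kernel
`K_τ(y,z) = e^τ (4π(1 − e^{−τ}))^{−1/2} exp(−(y e^{−τ/2} − z)²/(4(1 − e^{−τ})))`. -/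
noncomputable def K (τ y z : ℝ) : ℝ :=
  Real.exp τ * (4 * π * (1 - Real.exp (-τ))) ^ (-(1 / 2 : ℝ)) *
    Real.exp (-(y * Real.exp (-τ / 2) - z) ^ 2 / (4 * (1 - Real.exp (-τ))))

noncomputable def P : ℕ → Polynomial ℝ
  | 0 => 1
  | m + 1 => 2 * Polynomial.X * P m - Polynomial.derivative (P m)

lemma physHermite_eval (m : ℕ) : physHermite m = fun x => (P m).eval x := by
  induction m with
  | zero => funext x; simp [physHermite, P]
  | succ m ih =>
    funext x
    show 2 * x * physHermite m x - deriv (physHermite m) x = _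
    rw [ih]
    simp only [Polynomial.deriv, P]
    simp [Polynomial.eval_mul]

lemma P_succ_deriv : ∀ m : ℕ, Polynomial.derivative (P (m+1))
    = Polynomial.C (2*((m:ℝ)+1)) * P m := by
  intro m
  induction m using Nat.strong_induction_on with
  | _ m ih =>
    match m with
    | 0 => simp [P, map_ofNat]
    | (j+1) =>
      have h1 := ih j (by omega)
      show Polynomial.derivative (2 * X * P (j+1) - Polynomial.derivative (P (j+1))) = _
      rw [derivative_sub, derivative_mul, derivative_mul, h1, Polynomial.derivative_C_mul]
      have e : P (j+1) = 2 * X * P j - Polynomial.derivative (P j) := rfl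
      rw [e]
      push_cast
      simp only [map_add, map_mul, map_ofNat, map_one, derivative_X, derivative_ofNat]
      ring

lemma P_deriv_eval (m : ℕ) (u : ℝ) :
    (Polynomial.derivative (P m)).eval u = 2*(m:ℝ)*(P (m-1)).eval u := by
  cases m with
  | zero => simp [P]
  | succ k => rw [P_succ_deriv]; push_cast; simp

lemma deriv_physHermite (m : ℕ) (x : ℝ) :
    deriv (physHermite m) x = 2 * (m:ℝ) * physHermite (m - 1) x := by
  simp [physHermite_eval, Polynomial.deriv, P_deriv_eval]

lemma physHermite_succ_succ (k : ℕ) (u : ℝ) :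
    physHermite (k+2) u = 2*u*physHermite (k+1) u - 2*((k:ℝ)+1)*physHermite k u := by
  show 2*u*physHermite (k+1) u - deriv (physHermite (k+1)) u = _
  rw [deriv_physHermite]
  push_cast
  ring_nf

lemma hasDerivAt_gauss (x t : ℝ) :
    HasDerivAt (fun t => Real.exp (-(x - t)^2)) (2*(x-t) * Real.exp (-(x-t)^2)) t := by
  have h1 : HasDerivAt (fun t : ℝ => -(x - t)^2) (2*(x-t)) t := by
    have h := (((hasDerivAt_id t).const_sub x).pow 2).neg
    exact h.congr_deriv (by simp)
  have := h1.exp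
  convert this using 1
  ring

lemma hasDerivAt_physHermite_comp (m : ℕ) (β t : ℝ) :
    HasDerivAt (fun t => physHermite m (β * t)) (β * (2*(m:ℝ) * physHermite (m-1) (β*t))) t := by
  have h1 : HasDerivAt (fun t : ℝ => β * t) β t := by
    simpa using (hasDerivAt_id t).const_mul β
  have h2 := HasDerivAt.comp t ((P m).hasDerivAt (β * t)) h1
  simp only [physHermite_eval]
  exact h2.congr_deriv (by rw [P_deriv_eval]; ring)

lemma integrable_exp_lin_gauss (c : ℝ) : Integrable fun t : ℝ => Real.exp (c * t - t^2) := by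
  have h1 : Integrable fun t : ℝ => Real.exp (-(1:ℝ) * t^2) := integrable_exp_neg_mul_sq one_pos
  have key : (fun t : ℝ => Real.exp (c * t - t^2))
      = fun t => Real.exp (c^2/4) * Real.exp (-(1:ℝ)*(t - c/2)^2) := by
    funext t
    rw [← Real.exp_add]
    congr 1
    ring
  rw [key]
  exact (h1.comp_sub_right (c/2)).const_mul _

lemma integrable_pow_gauss (n : ℕ) : Integrable fun t : ℝ => t^n * Real.exp (-t^2) := by
  have hi : Integrable fun t : ℝ =>
      (n.factorial : ℝ) * (Real.exp (1*t - t^2) + Real.exp ((-1)*t - t^2)) :=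
    ((integrable_exp_lin_gauss 1).add (integrable_exp_lin_gauss (-1))).const_mul _
  refine hi.mono' ?_ ?_
  · exact ((continuous_pow n).mul (by continuity)).aestronglyMeasurable
  · refine Filter.Eventually.of_forall fun t => ?_
    have h1 : |t|^n ≤ (n.factorial : ℝ) * Real.exp |t| := by
      have h := Real.pow_div_factorial_le_exp (x := |t|) (abs_nonneg t) n
      rw [div_le_iff₀ (by positivity)] at h
      calc |t|^n ≤ Real.exp |t| * n.factorial := h
      _ = (n.factorial : ℝ) * Real.exp |t| := by ring
    have h2 : ‖t^n * Real.exp (-t^2)‖ = |t|^n * Real.exp (-t^2) := by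
      rw [norm_mul, norm_pow, Real.norm_eq_abs, Real.norm_eq_abs,
        abs_of_pos (Real.exp_pos _)]
    rw [h2]
    have h3 : |t|^n * Real.exp (-t^2) ≤ ((n.factorial : ℝ) * Real.exp |t|) * Real.exp (-t^2) :=
      mul_le_mul_of_nonneg_right h1 (Real.exp_pos _).le
    refine h3.trans ?_
    rw [mul_assoc, ← Real.exp_add]
    have h4 : Real.exp (|t| + -t^2) ≤ Real.exp (1*t - t^2) + Real.exp ((-1)*t - t^2) := by
      rcases abs_cases t with ⟨he, _⟩ | ⟨he, _⟩
      · rw [he]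
        have := (Real.exp_pos ((-1)*t - t^2)).le
        nlinarith [Real.exp_le_exp.2 (show t + -t^2 ≤ 1*t - t^2 by ring_nf; exact le_refl _)]
      · rw [he]
        have := (Real.exp_pos (1*t - t^2)).le
        nlinarith [Real.exp_le_exp.2 (show -t + -t^2 ≤ (-1)*t - t^2 by ring_nf; exact le_refl _)]
    exact mul_le_mul_of_nonneg_left h4 (by positivity)

lemma integrable_poly_gauss (p : Polynomial ℝ) :
    Integrable fun t : ℝ => p.eval t * Real.exp (-t^2) := by
  induction p using Polynomial.induction_on' with
  | add p q hp hq => simpa [add_mul, Pi.add_def] using hp.add hq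
  | monomial n a =>
      have := (integrable_pow_gauss n).const_mul a
      refine this.congr (Filter.Eventually.of_forall fun t => ?_)
      simp [Polynomial.eval_monomial]
      ring

lemma integrable_poly_gauss' (p : Polynomial ℝ) (x : ℝ) :
    Integrable fun t : ℝ => p.eval t * Real.exp (-(x - t)^2) := by
  have key : (fun t : ℝ => p.eval t * Real.exp (-(x - t)^2))
      = fun t => (p.comp (X + C x)).eval (t - x) * Real.exp (-(t - x)^2) := by
    funext t
    rw [Polynomial.eval_comp]
    simp only [Polynomial.eval_add, Polynomial.eval_X, Polynomial.eval_C]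
    rw [sub_add_cancel, show -(t - x)^2 = -(x - t)^2 by ring]
  rw [key]
  exact (integrable_poly_gauss (p.comp (X + C x))).comp_sub_right x

lemma integrable_shape (x : ℝ) (q : Polynomial ℝ) (f : ℝ → ℝ)
    (hf : ∀ t, f t = q.eval t * Real.exp (-(x - t)^2)) : Integrable f := by
  rw [show f = _ from funext hf]
  exact integrable_poly_gauss' q x

lemma integrable_A (m : ℕ) (β x : ℝ) :
    Integrable fun t : ℝ => Real.exp (-(x - t)^2) * physHermite m (β * t) := by
  refine integrable_shape x ((P m).comp (C β * X)) _ fun t => ?_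
  simp [physHermite_eval, Polynomial.eval_comp]
  ring

lemma integrable_B (m : ℕ) (β x : ℝ) :
    Integrable fun t : ℝ => (x - t) * Real.exp (-(x - t)^2) * physHermite m (β * t) := by
  refine integrable_shape x ((C x - X) * (P m).comp (C β * X)) _ fun t => ?_
  simp [physHermite_eval, Polynomial.eval_comp]
  ring

lemma parts (m : ℕ) (β x : ℝ) :
    ∫ t : ℝ, (x - t) * Real.exp (-(x - t)^2) * physHermite m (β * t)
      = -(β * (m:ℝ)) * ∫ t : ℝ, Real.exp (-(x - t)^2) * physHermite (m-1) (β * t) := by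
  have hder : ∀ t : ℝ, HasDerivAt
      (fun t => (-(1:ℝ)/2) * (Real.exp (-(x - t)^2) * physHermite m (β * t)))
      (-((x - t) * Real.exp (-(x - t)^2) * physHermite m (β * t)
        + (β * (m:ℝ)) * (Real.exp (-(x - t)^2) * physHermite (m-1) (β * t)))) t := by
    intro t
    have h := ((hasDerivAt_gauss x t).mul (hasDerivAt_physHermite_comp m β t)).const_mul
      (-(1:ℝ)/2)
    exact h.congr_deriv (by ring)
  have hf' : Integrable (fun t : ℝ =>
      -((x - t) * Real.exp (-(x - t)^2) * physHermite m (β * t)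
        + (β * (m:ℝ)) * (Real.exp (-(x - t)^2) * physHermite (m-1) (β * t)))) :=
    ((integrable_B m β x).add ((integrable_A (m-1) β x).const_mul _)).neg
  have hf : Integrable (fun t : ℝ =>
      (-(1:ℝ)/2) * (Real.exp (-(x - t)^2) * physHermite m (β * t))) :=
    (integrable_A m β x).const_mul _
  have h0 := integral_eq_zero_of_hasDerivAt_of_integrable hder hf' hf
  rw [integral_neg, integral_add (integrable_B m β x)
    ((integrable_A (m-1) β x).const_mul _), integral_const_mul] at h0
  linarith

lemma gauss_hermite (β : ℝ) (hβ0 : 0 < β) (hβ1 : β < 1) (m : ℕ) (x : ℝ) :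
    ∫ t : ℝ, Real.exp (-(x - t)^2) * physHermite m (β * t)
      = Real.sqrt π * (Real.sqrt (1 - β^2))^m
          * physHermite m (β * x / Real.sqrt (1 - β^2)) := by
  have h01 : (0:ℝ) < 1 - β^2 := by nlinarith
  have hγ0 : 0 < Real.sqrt (1 - β^2) := Real.sqrt_pos.2 h01
  have hγ2 : (Real.sqrt (1 - β^2))^2 = 1 - β^2 := Real.sq_sqrt h01.le
  have base0 : ∫ t : ℝ, Real.exp (-(x - t)^2) = Real.sqrt π := by
    have key : (fun t : ℝ => Real.exp (-(x - t)^2))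
        = fun t => Real.exp (-(1:ℝ) * (t - x)^2) := by
      funext t; congr 1; ring
    rw [key, integral_sub_right_eq_self (fun u : ℝ => Real.exp (-(1:ℝ) * u^2)) x,
      integral_gaussian]
    simp
  induction m using Nat.strong_induction_on with
  | _ m ih =>
    match m with
    | 0 => simpa [physHermite] using base0
    | 1 =>
      have h1 : ∀ u : ℝ, physHermite 1 u = 2 * u := by
        intro u; show 2 * u * physHermite 0 u - deriv (physHermite 0) u = 2 * u
        simp [physHermite]
      have hpt : ∀ t : ℝ, Real.exp (-(x - t)^2) * physHermite 1 (β * t)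
          = (2*β*x) * Real.exp (-(x - t)^2)
            - (2*β) * ((x - t) * Real.exp (-(x - t)^2) * physHermite 0 (β * t)) := by
        intro t; rw [h1]; simp [physHermite]; ring
      rw [integral_congr_ae (Filter.Eventually.of_forall hpt) ]
      have hA0 : Integrable (fun t : ℝ => (2*β*x) * Real.exp (-(x - t)^2)) := by
        have := (integrable_A 0 β x).const_mul (2*β*x)
        simpa [physHermite] using this
      rw [integral_sub hA0 ((integrable_B 0 β x).const_mul _),
        integral_const_mul, integral_const_mul, parts 0 β x, base0]
      rw [h1]
      push_cast
      field_simp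
      ring
    | (k+2) =>
      have ih1 := ih (k+1) (by omega)
      have ih0 := ih k (by omega)
      have hpt : ∀ t : ℝ, Real.exp (-(x - t)^2) * physHermite (k+2) (β * t)
          = (2*β*x) * (Real.exp (-(x - t)^2) * physHermite (k+1) (β * t))
            - (2*β) * ((x - t) * Real.exp (-(x - t)^2) * physHermite (k+1) (β * t))
            - (2*((k:ℝ)+1)) * (Real.exp (-(x - t)^2) * physHermite k (β * t)) := by
        intro t
        rw [physHermite_succ_succ]
        ring
      rw [integral_congr_ae (Filter.Eventually.of_forall hpt)]
      have hI1 : Integrable fun t : ℝ =>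
          2*β*x*(Real.exp (-(x - t)^2) * physHermite (k+1) (β*t))
            - 2*β*((x - t)*Real.exp (-(x - t)^2)*physHermite (k+1) (β*t)) :=
        ((integrable_A (k+1) β x).const_mul _).sub ((integrable_B (k+1) β x).const_mul _)
      rw [integral_sub hI1 ((integrable_A k β x).const_mul _),
        integral_sub ((integrable_A (k+1) β x).const_mul _)
            ((integrable_B (k+1) β x).const_mul _),
        integral_const_mul, integral_const_mul, integral_const_mul,
        parts (k+1) β x]
      simp only [Nat.add_sub_cancel, Nat.cast_add, Nat.cast_one]
      rw [ih1, ih0, physHermite_succ_succ]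
      set g := Real.sqrt (1 - β^2) with hgdef
      have hgne : g ≠ 0 := hγ0.ne'
      rw [mul_sub]
      have e3 : Real.sqrt π * g^(k+2) * (2*(β*x/g)*physHermite (k+1) (β*x/g))
          = 2*β*x*(Real.sqrt π * g^(k+1)*physHermite (k+1) (β*x/g)) := by
        field_simp [pow_succ]
        ring
      rw [e3]
      linear_combination (2*((k:ℝ)+1)*Real.sqrt π*physHermite k (β*x/g)*g^k) * hγ2

/-- `h_m` is an eigenfunction of the integral operator with kernel `K_τ`,
with eigenvalue `e^{(1 − m/2)τ}`. -/
theorem mehler_kernel_eigenfunction (τ : ℝ) (hτ : 0 < τ) (m : ℕ) (y : ℝ) :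
    ∫ z : ℝ, K τ y z * h m z = Real.exp ((1 - (m : ℝ) / 2) * τ) * h m y := by
  have hπ := Real.pi_pos
  set s : ℝ := Real.exp (-τ / 2) with hsdef
  have hs0 : 0 < s := Real.exp_pos _
  have hs1 : s < 1 := by
    rw [hsdef]; exact Real.exp_lt_one_iff.2 (by linarith)
  have hss : Real.exp (-τ) = s ^ 2 := by
    rw [hsdef, sq, ← Real.exp_add]; congr 1; ring
  have h1s : 0 < 1 - s ^ 2 := by nlinarith
  set β : ℝ := Real.sqrt (1 - s ^ 2) with hbdef
  have hβ0 : 0 < β := Real.sqrt_pos.2 h1s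
  have hβ2 : β ^ 2 = 1 - s ^ 2 := Real.sq_sqrt h1s.le
  have hβ1 : β < 1 := by nlinarith
  have hsq : Real.sqrt (1 - β ^ 2) = s := by
    rw [hβ2, show (1 : ℝ) - (1 - s ^ 2) = s ^ 2 by ring, Real.sqrt_sq hs0.le]
  set C0 : ℝ := Real.exp τ * (4 * π * (1 - s ^ 2)) ^ (-(1 / 2 : ℝ)) * hermiteCoeff m with hC0
  calc ∫ z : ℝ, K τ y z * h m z
      = ∫ z : ℝ, C0 * (Real.exp (-(y * s - z) ^ 2 / (4 * (1 - s ^ 2)))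
          * physHermite m (z / 2)) := by
        refine integral_congr_ae (Filter.Eventually.of_forall fun z => ?_)
        simp only [K, h, hC0]
        rw [hss, ← hsdef]
        ring
    _ = C0 * ∫ z : ℝ, Real.exp (-(y * s - z) ^ 2 / (4 * (1 - s ^ 2)))
          * physHermite m (z / 2) := integral_const_mul _ _
    _ = C0 * ((2 * β) * ∫ t : ℝ, Real.exp (-(y * s / (2 * β) - t) ^ 2)
          * physHermite m (β * t)) := by
        congr 1
        have hc := MeasureTheory.Measure.integral_comp_mul_left
          (fun z : ℝ => Real.exp (-(y * s - z) ^ 2 / (4 * (1 - s ^ 2)))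
            * physHermite m (z / 2)) (2 * β)
        have heq : (fun t : ℝ => Real.exp (-(y * s - 2 * β * t) ^ 2 / (4 * (1 - s ^ 2)))
              * physHermite m (2 * β * t / 2))
            = fun t : ℝ => Real.exp (-(y * s / (2 * β) - t) ^ 2) * physHermite m (β * t) := by
          funext t
          have e0 : y * s - 2 * β * t = (2 * β) * (y * s / (2 * β) - t) := by
            field_simp
          rw [show -(y * s - 2 * β * t) ^ 2 / (4 * (1 - s ^ 2))
              = -(y * s / (2 * β) - t) ^ 2 from by
            rw [← hβ2, e0, mul_pow, show (2 * β) ^ 2 = 4 * β ^ 2 from by ring, neg_div,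
              mul_comm ((4:ℝ) * β ^ 2), mul_div_assoc, div_self (by positivity), mul_one],
            show 2 * β * t / 2 = β * t by ring]
        rw [heq] at hc
        rw [hc, smul_eq_mul, abs_of_pos (by positivity : (0:ℝ) < (2 * β)⁻¹)]
        field_simp
    _ = C0 * ((2 * β) * (Real.sqrt π * s ^ m * physHermite m (y / 2))) := by
        rw [gauss_hermite β hβ0 hβ1 m (y * s / (2 * β)), hsq,
          show β * (y * s / (2 * β)) / s = y / 2 from by field_simp]
    _ = Real.exp ((1 - (m : ℝ) / 2) * τ) * h m y := by
        rw [h, hC0]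
        have h4π : (0:ℝ) < 4 * π * (1 - s ^ 2) := by positivity
        have hπ0 : 0 < Real.sqrt π := Real.sqrt_pos.2 hπ
        have hsqrt4 : Real.sqrt (4 * π * (1 - s ^ 2)) = 2 * Real.sqrt π * β := by
          rw [show 4 * π * (1 - s ^ 2) = (2 * Real.sqrt π * β) ^ 2 from by
            rw [mul_pow, mul_pow, Real.sq_sqrt hπ.le, hβ2]; ring]
          exact Real.sqrt_sq (by positivity)
        have hrpow : (4 * π * (1 - s ^ 2)) ^ (-(1 / 2 : ℝ)) = (2 * Real.sqrt π * β)⁻¹ := by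
          rw [Real.rpow_neg h4π.le, ← Real.sqrt_eq_rpow, hsqrt4]
        have hexp : Real.exp τ * s ^ m = Real.exp ((1 - (m : ℝ) / 2) * τ) := by
          rw [hsdef, ← Real.exp_nat_mul, ← Real.exp_add]
          congr 1; ring
        rw [hrpow, ← hexp]
        field_simp
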